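/- Let n ≥ 2 and let w ∈ S^{n-1}. There exists a discrete, separated set E ⊆ 𝔻ⁿ with limit set L(E) = {w} (so dim_H L(E) = dim_B L(E) = 0) and critical exponent δ(E) = n − 1. (For example, take E = ∪_k E_k where E_k is a maximal 2^{-k}-separated set of points at Euclidean distance 2^{-k} from S^{n-1} and within distance 2^{-√k} of w.) -/

import Mathlib

open Metric Set Filter
open scoped ENNReal NNReal

noncomputable section

/-- Points of `ℝⁿ` (Euclidean space). -/
abbrev Pt (n : ℕ) := EuclideanSpace ℝ (Fin n)

/-- `E` is a discrete set: every point of `E` is isolated in `E`. -/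
def IsDiscreteSet {n : ℕ} (E : Set (Pt n)) : Prop :=
  ∀ x ∈ E, ∃ r > 0, closedBall x r ∩ E = {x}

/-- The limit set `L(E) = cl(E) \ E`. -/
def limitSet {n : ℕ} (E : Set (Pt n)) : Set (Pt n) := closure E \ E

/-- `E ⊆ 𝔻ⁿ` is separated. -/
def SeparatedSet {n : ℕ} (E : Set (Pt n)) : Prop :=
  ∃ c₁ : ℝ, 0 < c₁ ∧ c₁ < 1 ∧ ∀ x ∈ E, closedBall x (c₁ * (1 - ‖x‖)) ∩ E = {x}

/-- `E ⊆ 𝔻ⁿ` is well-approximated. -/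
def WellApproximated {n : ℕ} (E : Set (Pt n)) : Prop :=
  ∃ c₂ : ℝ, 1 ≤ c₂ ∧ ∀ x ∈ E, ∃ z ∈ limitSet E, dist x z ≤ c₂ * (1 - ‖x‖)

/-- `E` is `α`-separated. -/
def AlphaSeparated {n : ℕ} (E : Set (Pt n)) (α : ℝ) : Prop :=
  ∃ c₁ : ℝ, 0 < c₁ ∧ ∀ x ∈ E, closedBall x (c₁ * (1 - ‖x‖) ^ α) ∩ E = {x}

/-- `E` is `β`-well-approximated. -/
def BetaWellApproximated {n : ℕ} (E : Set (Pt n)) (β : ℝ) : Prop :=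
  ∃ c₂ : ℝ, 1 ≤ c₂ ∧ ∀ x ∈ E, ∃ z ∈ limitSet E, dist x z ≤ c₂ * (1 - ‖x‖) ^ β

/-- The accumulation series `S_E(s) = ∑_{x ∈ E} (1 - |x|)^s` (valued in `ℝ≥0∞`). -/
def accSeries {n : ℕ} (E : Set (Pt n)) (s : ℝ) : ℝ≥0∞ :=
  ∑' x : E, ENNReal.ofReal ((1 - ‖(x : Pt n)‖) ^ s)

/-- The critical exponent `δ(E) = inf { s ≥ 0 : S_E(s) < ∞ }`, with `inf ∅ = ∞`. -/
def critExp {n : ℕ} (E : Set (Pt n)) : ℝ≥0∞ :=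
  ⨅ (s : ℝ≥0) (_ : accSeries E (s : ℝ) < ⊤), (s : ℝ≥0∞)

/-- The set of `c`-radial limit points of `E`. -/
def radialPoints {n : ℕ} (E : Set (Pt n)) (c : ℝ) : Set (Pt n) :=
  {z | ‖z‖ = 1 ∧ ∀ r > 0, ∃ x ∈ E,
    dist x z ≤ c * (1 - ‖x‖) ∧ c * (1 - ‖x‖) ≤ c * r}

/-- The radial limit set `L_rad(E) = ⋃_{c ≥ 1} L_c(E)`. -/
def radialLimitSet {n : ℕ} (E : Set (Pt n)) : Set (Pt n) :=
  ⋃ c ∈ Ici (1 : ℝ), radialPoints E c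

/-- The set of `(γ, c)`-radial limit points of `E`. -/
def gammaRadialPoints {n : ℕ} (E : Set (Pt n)) (γ c : ℝ) : Set (Pt n) :=
  {z | z ∈ limitSet E ∧ ∀ r > 0, ∃ x ∈ E,
    dist x z ≤ c * (1 - ‖x‖) ^ γ ∧ c * (1 - ‖x‖) ^ γ ≤ c * r ^ γ}

/-- The `γ`-radial limit set `L_rad^γ(E) = ⋃_{c ≥ 1} L_c^γ(E)`. -/
def gammaRadialLimitSet {n : ℕ} (E : Set (Pt n)) (γ : ℝ) : Set (Pt n) :=
  ⋃ c ∈ Ici (1 : ℝ), gammaRadialPoints E γ c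

/-- The packing number `N_δ(F)`: the maximal cardinality of a packing of `F` by
pairwise disjoint closed balls of radius `δ` centred in `F`. -/
def packingNumber {n : ℕ} (F : Set (Pt n)) (δ : ℝ) : ℕ∞ :=
  ⨆ (Z : Finset (Pt n)) (_ : ↑Z ⊆ F)
    (_ : (Z : Set (Pt n)).PairwiseDisjoint fun x => closedBall x δ), (Z.card : ℕ∞)

/-- The upper box dimension `limsup_{δ → 0⁺} log N_δ(F) / (-log δ)`. -/
def upperBoxDim {n : ℕ} (F : Set (Pt n)) : ℝ≥0∞ :=
  limsup (fun δ : ℝ =>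
    ENNReal.ofReal (Real.log ((packingNumber F δ).toNat : ℝ) / (-Real.log δ)))
    (nhdsWithin 0 (Ioi 0))

/-- The lower box dimension `liminf_{δ → 0⁺} log N_δ(F) / (-log δ)`. -/
def lowerBoxDim {n : ℕ} (F : Set (Pt n)) : ℝ≥0∞ :=
  liminf (fun δ : ℝ =>
    ENNReal.ofReal (Real.log ((packingNumber F δ).toNat : ℝ) / (-Real.log δ)))
    (nhdsWithin 0 (Ioi 0))

namespace Aux
def Mk (m k : ℕ) : ℕ := 2 ^ k / (k * (m + 2))
def box (m k : ℕ) : Finset (Fin (m + 1) → ℤ) :=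
  if 2 * (m + 2) ≤ k then Finset.Icc (fun _ => -(Mk m k : ℤ)) (fun _ => (Mk m k : ℤ)) else ∅

lemma mem_box {m k : ℕ} {a : Fin (m + 1) → ℤ} (ha : a ∈ box m k) :
    2 * (m + 2) ≤ k ∧ ∀ i, |a i| ≤ (Mk m k : ℤ) := by
  by_cases h : 2 * (m + 2) ≤ k
  · simp only [box, if_pos h, Finset.mem_Icc] at ha
    exact ⟨h, fun i => abs_le.2 ⟨(ha.1 i), (ha.2 i)⟩⟩
  · simp [box, if_neg h] at ha

lemma mem_box_of {m k : ℕ} (hk : 2 * (m + 2) ≤ k) {a : Fin (m + 1) → ℤ}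
    (ha : ∀ i, |a i| ≤ (Mk m k : ℤ)) : a ∈ box m k := by
  simp only [box, if_pos hk, Finset.mem_Icc]
  exact ⟨fun i => (abs_le.1 (ha i)).1, fun i => (abs_le.1 (ha i)).2⟩

lemma sq_le_two_pow {k : ℕ} (h : 4 ≤ k) : k ^ 2 ≤ 2 ^ k := by
  induction k with
  | zero => simp at h
  | succ n ih =>
    rcases Nat.lt_or_ge n 4 with h4 | h4
    · interval_cases n <;> simp_all
    · have := ih (by omega)
      have h2 : 2 * n + 1 ≤ 2 ^ n := by nlinarith
      calc (n+1)^2 = n^2 + (2*n+1) := by ring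
        _ ≤ 2^n + 2^n := by omega
        _ = 2^(n+1) := by ring

lemma four_le {m k : ℕ} (hk : 2 * (m + 2) ≤ k) : 4 ≤ k := by omega

lemma two_pow_ge {m k : ℕ} (hk : 2 * (m + 2) ≤ k) : 2 * (k * (m + 2)) ≤ 2 ^ k := by
  have h1 : k ^ 2 ≤ 2 ^ k := sq_le_two_pow (four_le hk)
  nlinarith

lemma Mk_pos {m k : ℕ} (hk : 2 * (m + 2) ≤ k) : 1 ≤ Mk m k := by
  have := two_pow_ge hk
  have hd : 0 < k * (m + 2) := by
    have : 0 < k := by omega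
    positivity
  rw [Mk, Nat.le_div_iff_mul_le hd]
  nlinarith

lemma Mk_le : ∀ (m k : ℕ), (Mk m k) * (k * (m + 2)) ≤ 2 ^ k := fun m k => Nat.div_mul_le_self _ _

lemma two_pow_le_Mk {m k : ℕ} (hk : 2 * (m + 2) ≤ k) :
    2 ^ k ≤ 2 * (k * (m + 2)) * Mk m k := by
  have hd : 0 < k * (m + 2) := Nat.mul_pos (by omega) (by omega)
  have h1 : 2 ^ k < (k * (m + 2)) * (Mk m k + 1) := by
    have hdm := Nat.div_add_mod (2 ^ k) (k * (m + 2))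
    have hmod := Nat.mod_lt (2 ^ k) hd
    have hexp : (k * (m + 2)) * (Mk m k + 1)
        = (k * (m + 2)) * (2 ^ k / (k * (m + 2))) + (k * (m + 2)) := by rw [Mk]; ring
    omega
  have h2 : 1 ≤ Mk m k := Mk_pos hk
  nlinarith

lemma Mk_le_two_pow {m k : ℕ} (hk : 2 * (m + 2) ≤ k) : Mk m k ≤ 2 ^ k :=
  le_trans (Nat.div_le_self _ _) le_rfl

lemma card_box {m k : ℕ} (hk : 2 * (m + 2) ≤ k) :
    (box m k).card = (2 * Mk m k + 1) ^ (m + 1) := by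
  rw [box, if_pos hk, Pi.card_Icc]
  simp only [Int.card_Icc]
  rw [Finset.prod_const]
  congr 1
  · omega
  · simp

def tang (m k : ℕ) (a : Fin (m + 1) → ℤ) : Fin (m + 1) → ℝ :=
  fun i => (a i : ℝ) * (2 : ℝ)⁻¹ ^ k

def pt (m k : ℕ) (a : Fin (m + 1) → ℤ) : Pt (m + 2) :=
  (WithLp.equiv 2 _).symm
    (Fin.cons (Real.sqrt ((1 - (2 : ℝ)⁻¹ ^ k) ^ 2 - ∑ i, tang m k a i ^ 2)) (tang m k a))

lemma pt_apply_zero (m k : ℕ) (a : Fin (m + 1) → ℤ) :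
    pt m k a 0 = Real.sqrt ((1 - (2 : ℝ)⁻¹ ^ k) ^ 2 - ∑ i, tang m k a i ^ 2) := rfl

lemma pt_apply_succ (m k : ℕ) (a : Fin (m + 1) → ℤ) (i : Fin (m + 1)) :
    pt m k a i.succ = tang m k a i := by
  simp [pt, WithLp.equiv_symm_apply]

def E (m : ℕ) : Set (Pt (m + 2)) := ⋃ k, pt m k '' (box m k)

lemma kR_pos {m k : ℕ} (hk : 2 * (m + 2) ≤ k) : (0:ℝ) < k := by
  have := four_le hk; positivity

lemma half_pow_le_inv_sq {m k : ℕ} (hk : 2 * (m + 2) ≤ k) :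
    (2:ℝ)⁻¹ ^ k ≤ 1 / (k:ℝ) ^ 2 := by
  have h1 : ((k:ℝ)) ^ 2 ≤ 2 ^ k := by
    exact_mod_cast sq_le_two_pow (four_le hk)
  have h2 : (0:ℝ) < (k:ℝ) ^ 2 := by have := kR_pos hk; positivity
  rw [inv_pow, ← one_div, div_le_div_iff₀ (by positivity) h2]
  nlinarith

lemma half_pow_le_sixteenth {m k : ℕ} (hk : 2 * (m + 2) ≤ k) :
    (2:ℝ)⁻¹ ^ k ≤ 1 / 16 := by
  calc (2:ℝ)⁻¹ ^ k ≤ (2:ℝ)⁻¹ ^ 4 :=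
        pow_le_pow_of_le_one (by norm_num) (by norm_num) (four_le hk)
    _ = 1 / 16 := by norm_num

lemma sum_tang_sq_le {m k : ℕ} {a : Fin (m + 1) → ℤ} (ha : a ∈ box m k) :
    ∑ i, tang m k a i ^ 2 ≤ 1 / (k:ℝ) ^ 2 := by
  obtain ⟨hk, hab⟩ := mem_box ha
  have hkpos := kR_pos hk
  have hdpos : (0:ℝ) < (k:ℝ) * (m + 2) := by positivity
  have hM : (Mk m k : ℝ) * ((k:ℝ) * (m + 2)) ≤ 2 ^ k := by
    have := Mk_le m k
    calc (Mk m k : ℝ) * ((k:ℝ) * (m + 2)) = ((Mk m k * (k * (m+2)) : ℕ) : ℝ) := by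
          push_cast; ring
      _ ≤ ((2 ^ k : ℕ) : ℝ) := by exact_mod_cast this
      _ = 2 ^ k := by push_cast; ring
  have hM2 : (Mk m k : ℝ) * (2:ℝ)⁻¹ ^ k ≤ 1 / ((k:ℝ) * (m + 2)) := by
    rw [inv_pow, ← one_div, mul_one_div, div_le_div_iff₀ (by positivity) hdpos]
    nlinarith [hM]
  have hterm : ∀ i, tang m k a i ^ 2 ≤ (1 / ((k:ℝ) * (m + 2))) ^ 2 := by
    intro i
    have h1 : |tang m k a i| ≤ 1 / ((k:ℝ) * (m + 2)) := by
      rw [tang, abs_mul, abs_pow]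
      calc |(a i : ℝ)| * |(2:ℝ)⁻¹| ^ k ≤ (Mk m k : ℝ) * (2:ℝ)⁻¹ ^ k := by
            have : |(a i : ℝ)| ≤ (Mk m k : ℝ) := by exact_mod_cast (abs_le.1 (hab i)) |> abs_le.2
            have h2 : |(2:ℝ)⁻¹| = (2:ℝ)⁻¹ := by norm_num
            rw [h2]
            exact mul_le_mul_of_nonneg_right this (by positivity)
        _ ≤ 1 / ((k:ℝ) * (m + 2)) := hM2
    calc tang m k a i ^ 2 = |tang m k a i| ^ 2 := (sq_abs _).symm
      _ ≤ (1 / ((k:ℝ) * (m + 2))) ^ 2 := by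
          apply pow_le_pow_left₀ (abs_nonneg _) h1
  calc ∑ i, tang m k a i ^ 2 ≤ ∑ _i : Fin (m+1), (1 / ((k:ℝ) * (m + 2))) ^ 2 :=
        Finset.sum_le_sum (fun i _ => hterm i)
    _ = (m + 1) * (1 / ((k:ℝ) * (m + 2))) ^ 2 := by
        rw [Finset.sum_const]; simp [Finset.card_univ]
    _ ≤ 1 / (k:ℝ) ^ 2 := by
        rw [div_pow, one_pow, mul_pow, mul_one_div, div_le_div_iff₀ (by positivity) (by positivity)]
        have hm2 : ((m:ℝ) + 1) ≤ ((m:ℝ) + 2) ^ 2 := by nlinarith [Nat.cast_nonneg (α := ℝ) m]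
        nlinarith [sq_nonneg (k:ℝ), kR_pos hk]

/-- Abbreviations used throughout. -/
lemma rho_bounds {m k : ℕ} (hk : 2 * (m + 2) ≤ k) :
    (15/16 : ℝ) ≤ 1 - (2:ℝ)⁻¹ ^ k ∧ (0:ℝ) < (2:ℝ)⁻¹ ^ k ∧ (2:ℝ)⁻¹ ^ k < 1 := by
  have h1 := half_pow_le_sixteenth hk
  have h2 : (0:ℝ) < (2:ℝ)⁻¹ ^ k := by positivity
  exact ⟨by linarith, h2, by linarith⟩

lemma sq_sub_nonneg {m k : ℕ} {a : Fin (m + 1) → ℤ} (ha : a ∈ box m k) :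
    0 ≤ (1 - (2:ℝ)⁻¹ ^ k) ^ 2 - ∑ i, tang m k a i ^ 2 := by
  obtain ⟨hk, -⟩ := mem_box ha
  have hS := sum_tang_sq_le ha
  have h16 : (1:ℝ) / (k:ℝ)^2 ≤ 1/16 := by
    have h4 : (4:ℝ) ≤ (k:ℝ) := by exact_mod_cast four_le hk
    rw [div_le_div_iff₀ (by positivity) (by norm_num)]
    nlinarith
  have hρ := (rho_bounds hk).1
  nlinarith

lemma norm_pt {m k : ℕ} {a : Fin (m + 1) → ℤ} (ha : a ∈ box m k) :
    ‖pt m k a‖ = 1 - (2:ℝ)⁻¹ ^ k := by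
  obtain ⟨hk, -⟩ := mem_box ha
  have hρ := (rho_bounds hk).1
  rw [EuclideanSpace.norm_eq]
  have hsum : ∑ j, ‖pt m k a j‖ ^ 2 = (1 - (2:ℝ)⁻¹ ^ k) ^ 2 := by
    rw [Fin.sum_univ_succ]
    have h0 : ‖pt m k a 0‖ ^ 2 = (1 - (2:ℝ)⁻¹ ^ k) ^ 2 - ∑ i, tang m k a i ^ 2 := by
      rw [pt_apply_zero, Real.norm_eq_abs, sq_abs, Real.sq_sqrt (sq_sub_nonneg ha)]
    have hs : ∀ i : Fin (m+1), ‖pt m k a i.succ‖ ^ 2 = tang m k a i ^ 2 := by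
      intro i; rw [pt_apply_succ, Real.norm_eq_abs, sq_abs]
    rw [h0, Finset.sum_congr rfl (fun i _ => hs i)]
    ring
  rw [hsum, Real.sqrt_sq (by linarith)]

def e0 (m : ℕ) : Pt (m + 2) := EuclideanSpace.single (0 : Fin (m + 2)) (1:ℝ)

lemma norm_e0 (m : ℕ) : ‖e0 m‖ = 1 := by simp [e0]

lemma real_aux {ρ S h c : ℝ} (hS0 : 0 ≤ S) (hSle : S ≤ c) (hρ1 : (15/16:ℝ) ≤ ρ)
    (hρlt1 : ρ ≤ 1) (hsq : h ^ 2 = ρ ^ 2 - S) (hh0 : 0 ≤ h) (hone : 1 - ρ ≤ c) :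
    ρ ^ 2 + 1 - 2 * h ≤ 9 * c := by
  have hhρ : h ≤ ρ := by nlinarith [sq_nonneg (h - ρ), sq_nonneg (h + ρ)]
  have hh1 : h ≤ 1 := by linarith
  nlinarith [sq_nonneg (1 - ρ), mul_nonneg (by linarith : (0:ℝ) ≤ 1 - ρ) (by linarith : (0:ℝ) ≤ 1 + ρ)]

lemma dist_pt_e0 {m k : ℕ} {a : Fin (m + 1) → ℤ} (ha : a ∈ box m k) :
    dist (pt m k a) (e0 m) ≤ 3 / (k:ℝ) := by
  obtain ⟨hk, -⟩ := mem_box ha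
  have hkpos := kR_pos hk
  have hS0 : 0 ≤ ∑ i, tang m k a i ^ 2 := Finset.sum_nonneg (fun i _ => sq_nonneg _)
  have hSle := sum_tang_sq_le ha
  have hρ1 := (rho_bounds hk).1
  have hρpos := (rho_bounds hk).2.1
  have hsq : (Real.sqrt ((1 - (2:ℝ)⁻¹ ^ k) ^ 2 - ∑ i, tang m k a i ^ 2)) ^ 2
      = (1 - (2:ℝ)⁻¹ ^ k) ^ 2 - ∑ i, tang m k a i ^ 2 := Real.sq_sqrt (sq_sub_nonneg ha)
  have hhalf : (2:ℝ)⁻¹ ^ k ≤ 1 / (k:ℝ)^2 := half_pow_le_inv_sq hk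
  rw [EuclideanSpace.dist_eq]
  have hsum : ∑ j, dist (pt m k a j) (e0 m j) ^ 2
      = (1 - (2:ℝ)⁻¹ ^ k) ^ 2 + 1
        - 2 * Real.sqrt ((1 - (2:ℝ)⁻¹ ^ k) ^ 2 - ∑ i, tang m k a i ^ 2) := by
    rw [Fin.sum_univ_succ]
    have he0 : e0 m 0 = 1 := by simp [e0]
    have hes : ∀ i : Fin (m+1), e0 m i.succ = 0 := by
      intro i
      simp [e0, EuclideanSpace.single_apply, (Fin.succ_ne_zero i)]
    have h0 : dist (pt m k a 0) (e0 m 0) ^ 2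
        = (Real.sqrt ((1 - (2:ℝ)⁻¹ ^ k) ^ 2 - ∑ i, tang m k a i ^ 2) - 1) ^ 2 := by
      rw [pt_apply_zero, he0, Real.dist_eq, sq_abs]
    have hs : ∀ i : Fin (m+1), dist (pt m k a i.succ) (e0 m i.succ) ^ 2 = tang m k a i ^ 2 := by
      intro i; rw [pt_apply_succ, hes, Real.dist_eq, sub_zero, sq_abs]
    rw [h0, Finset.sum_congr rfl (fun i _ => hs i)]
    nlinarith [hsq]
  rw [hsum]
  have hb := real_aux hS0 hSle hρ1 (by linarith) hsq (Real.sqrt_nonneg _)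
    (by simpa using hhalf)
  calc Real.sqrt _ ≤ Real.sqrt ((3 / (k:ℝ))^2) := by
        apply Real.sqrt_le_sqrt
        rw [div_pow]
        calc (1 - (2:ℝ)⁻¹ ^ k) ^ 2 + 1
              - 2 * Real.sqrt ((1 - (2:ℝ)⁻¹ ^ k) ^ 2 - ∑ i, tang m k a i ^ 2)
            ≤ 9 * (1 / (k:ℝ)^2) := hb
          _ = 3^2 / (k:ℝ)^2 := by ring
    _ = 3 / (k:ℝ) := Real.sqrt_sq (by positivity)

lemma coord_dist_le {m : ℕ} (x y : Pt (m + 2)) (j : Fin (m + 2)) :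
    dist (x j) (y j) ≤ dist x y := by
  rw [EuclideanSpace.dist_eq]
  have h1 : dist (x j) (y j) ^ 2 ≤ ∑ i, dist (x i) (y i) ^ 2 :=
    Finset.single_le_sum (f := fun i => dist (x i) (y i) ^ 2)
      (fun i _ => sq_nonneg _) (Finset.mem_univ j)
  calc dist (x j) (y j) = Real.sqrt (dist (x j) (y j) ^ 2) :=
        (Real.sqrt_sq dist_nonneg).symm
    _ ≤ _ := Real.sqrt_le_sqrt h1

lemma sep_main {m k k' : ℕ} {a a' : Fin (m + 1) → ℤ} (ha : a ∈ box m k)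
    (ha' : a' ∈ box m k') (hne : k ≠ k' ∨ a ≠ a') :
    (2:ℝ)⁻¹ ^ k / 2 ≤ dist (pt m k' a') (pt m k a) := by
  rcases eq_or_ne k k' with rfl | hkk
  · -- same shell
    have hane : a ≠ a' := by tauto
    obtain ⟨i, hi⟩ := Function.ne_iff.1 hane
    have h1 : (2:ℝ)⁻¹ ^ k ≤ dist (pt m k a' i.succ) (pt m k a i.succ) := by
      rw [pt_apply_succ, pt_apply_succ, tang, tang, Real.dist_eq, ← sub_mul, abs_mul]
      have h2 : (1:ℝ) ≤ |(a' i : ℝ) - (a i : ℝ)| := by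
        have : a' i - a i ≠ 0 := sub_ne_zero.2 (Ne.symm hi)
        have h3 : (1:ℤ) ≤ |a' i - a i| := Int.one_le_abs this
        calc (1:ℝ) = ((1:ℤ):ℝ) := by norm_num
          _ ≤ ((|a' i - a i| : ℤ) : ℝ) := by exact_mod_cast h3
          _ = |(a' i : ℝ) - (a i : ℝ)| := by rw [Int.cast_abs]; push_cast; ring_nf
      have h4 : |(2:ℝ)⁻¹ ^ k| = (2:ℝ)⁻¹ ^ k := abs_of_nonneg (by positivity)
      rw [h4]
      nlinarith [pow_pos (by norm_num : (0:ℝ) < (2:ℝ)⁻¹) k]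
    have := coord_dist_le (pt m k a') (pt m k a) i.succ
    have hpos : (0:ℝ) < (2:ℝ)⁻¹ ^ k := by positivity
    linarith
  · -- different shells
    have hx := norm_pt ha
    have hy := norm_pt ha'
    have habs : |‖pt m k' a'‖ - ‖pt m k a‖| ≤ dist (pt m k' a') (pt m k a) := by
      rw [dist_eq_norm]
      exact abs_norm_sub_norm_le _ _
    rw [hx, hy] at habs
    have heq : |(1 - (2:ℝ)⁻¹ ^ k') - (1 - (2:ℝ)⁻¹ ^ k)| = |(2:ℝ)⁻¹ ^ k - (2:ℝ)⁻¹ ^ k'| := by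
      ring_nf
    rw [heq] at habs
    have hkey : (2:ℝ)⁻¹ ^ k / 2 ≤ |(2:ℝ)⁻¹ ^ k - (2:ℝ)⁻¹ ^ k'| := by
      rcases Nat.lt_or_ge k k' with hlt | hge
      · have h1 : (2:ℝ)⁻¹ ^ k' ≤ (2:ℝ)⁻¹ ^ (k + 1) :=
          pow_le_pow_of_le_one (by norm_num) (by norm_num) hlt
        have h2 : (2:ℝ)⁻¹ ^ (k+1) = (2:ℝ)⁻¹ ^ k / 2 := by rw [pow_succ]; ring
        rw [abs_of_nonneg (by rw [h2] at h1; linarith [pow_pos (by norm_num : (0:ℝ) < (2:ℝ)⁻¹) k])]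
        rw [h2] at h1; linarith
      · have hk'k : k' + 1 ≤ k := by omega
        have h1 : (2:ℝ)⁻¹ ^ k ≤ (2:ℝ)⁻¹ ^ (k' + 1) :=
          pow_le_pow_of_le_one (by norm_num) (by norm_num) hk'k
        have h2 : (2:ℝ)⁻¹ ^ (k'+1) = (2:ℝ)⁻¹ ^ k' / 2 := by rw [pow_succ]; ring
        rw [abs_of_nonpos (by rw [h2] at h1; linarith [pow_pos (by norm_num : (0:ℝ) < (2:ℝ)⁻¹) k'])]
        rw [h2] at h1
        linarith [pow_pos (by norm_num : (0:ℝ) < (2:ℝ)⁻¹) k]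
    linarith

lemma pt_inj {m k k' : ℕ} {a a' : Fin (m + 1) → ℤ} (ha : a ∈ box m k)
    (ha' : a' ∈ box m k') (h : pt m k a = pt m k' a') : k = k' ∧ a = a' := by
  by_contra hc
  rw [not_and_or] at hc
  have hne : k ≠ k' ∨ a ≠ a' := hc
  have h1 := sep_main ha ha' hne
  rw [h, dist_self] at h1
  have h2 : (0:ℝ) < (2:ℝ)⁻¹ ^ k / 2 := by positivity
  linarith

lemma mem_E {m : ℕ} {x : Pt (m + 2)} :
    x ∈ E m ↔ ∃ k, ∃ a ∈ box m k, x = pt m k a := by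
  simp only [E, Set.mem_iUnion, Set.mem_image]
  constructor
  · rintro ⟨k, a, ha, rfl⟩; exact ⟨k, a, ha, rfl⟩
  · rintro ⟨k, a, ha, rfl⟩; exact ⟨k, a, ha, rfl⟩

lemma E_subset_ball (m : ℕ) : E m ⊆ ball (0 : Pt (m + 2)) 1 := by
  intro x hx
  obtain ⟨k, a, ha, rfl⟩ := mem_E.1 hx
  rw [mem_ball, dist_zero_right, norm_pt ha]
  have : (0:ℝ) < (2:ℝ)⁻¹ ^ k := by positivity
  linarith

lemma E_separation {m : ℕ} {x : Pt (m + 2)} (hx : x ∈ E m) :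
    closedBall x ((1/3 : ℝ) * (1 - ‖x‖)) ∩ E m = {x} := by
  obtain ⟨k, a, ha, rfl⟩ := mem_E.1 hx
  apply Set.eq_singleton_iff_unique_mem.2
  constructor
  · refine ⟨?_, hx⟩
    rw [mem_closedBall, dist_self, norm_pt ha]
    have h2 : (1/3:ℝ) * (1 - (1 - (2:ℝ)⁻¹ ^ k)) = (2:ℝ)⁻¹ ^ k / 3 := by ring
    rw [h2]
    positivity
  · rintro y ⟨hyb, hyE⟩
    obtain ⟨k', a', ha', rfl⟩ := mem_E.1 hyE
    by_contra hne
    have hkk : k ≠ k' ∨ a ≠ a' := by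
      by_contra hc
      rw [not_or, not_not, not_not] at hc
      exact hne (by rw [hc.1, hc.2])
    have hsep := sep_main ha ha' hkk
    rw [mem_closedBall, norm_pt ha] at hyb
    have hpos : (0:ℝ) < (2:ℝ)⁻¹ ^ k := by positivity
    have : (1/3 : ℝ) * (1 - (1 - (2:ℝ)⁻¹ ^ k)) = (2:ℝ)⁻¹ ^ k / 3 := by ring
    rw [this] at hyb
    linarith

lemma E_separated (m : ℕ) : SeparatedSet (E m) :=
  ⟨1/3, by norm_num, by norm_num, fun x hx => E_separation hx⟩

lemma E_discrete (m : ℕ) : IsDiscreteSet (E m) := by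
  intro x hx
  obtain ⟨k, a, ha, rfl⟩ := mem_E.1 hx
  refine ⟨(1/3 : ℝ) * (1 - ‖pt m k a‖), ?_, E_separation hx⟩
  rw [norm_pt ha]
  have h2 : (1/3:ℝ) * (1 - (1 - (2:ℝ)⁻¹ ^ k)) = (2:ℝ)⁻¹ ^ k / 3 := by ring
  rw [h2]
  positivity

lemma e0_mem_closure (m : ℕ) : e0 m ∈ closure (E m) := by
  rw [Metric.mem_closure_iff]
  intro ε hε
  set k := max (2 * (m + 2)) (⌈3 / ε⌉₊ + 1) with hkdef
  have hk : 2 * (m + 2) ≤ k := le_max_left _ _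
  have hzero : (0 : Fin (m+1) → ℤ) ∈ box m k :=
    mem_box_of hk (fun i => by simp [Mk_pos hk])
  refine ⟨pt m k 0, mem_E.2 ⟨k, 0, hzero, rfl⟩, ?_⟩
  have h1 : dist (e0 m) (pt m k 0) ≤ 3 / (k:ℝ) := by
    rw [dist_comm]; exact dist_pt_e0 hzero
  have hkc : 3 / ε < (k:ℝ) := by
    have h2 : (⌈3 / ε⌉₊ + 1 : ℕ) ≤ k := le_max_right _ _
    have h3 : (3:ℝ) / ε ≤ (⌈3 / ε⌉₊ : ℝ) := Nat.le_ceil _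
    have h4 : ((⌈3 / ε⌉₊ + 1 : ℕ) : ℝ) ≤ (k:ℝ) := by exact_mod_cast h2
    push_cast at h4
    linarith
  have hkpos : (0:ℝ) < k := kR_pos hk
  have h5 : 3 / (k:ℝ) < ε := by
    rw [div_lt_iff₀ hkpos]
    rw [div_lt_iff₀ hε] at hkc
    linarith
  linarith

lemma e0_not_mem (m : ℕ) : e0 m ∉ E m := by
  intro h
  have h1 := E_subset_ball m h
  rw [mem_ball, dist_zero_right, norm_e0] at h1
  exact lt_irrefl _ h1

lemma closure_E (m : ℕ) : closure (E m) = E m ∪ {e0 m} := by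
  apply Subset.antisymm
  · intro z hz
    by_cases hze : z = e0 m
    · exact Or.inr (by simp [hze])
    left
    have hd : 0 < dist z (e0 m) := dist_pos.2 hze
    set d := dist z (e0 m) with hddef
    set k₁ : ℕ := ⌈6 / d⌉₊ + 1 with hk1def
    have hbig : ∀ k : ℕ, k₁ ≤ k → d / 2 ≤ 3 / (k:ℝ) → False := by
      intro k hk hle
      have hkpos : (0:ℝ) < k := by
        have : (1:ℕ) ≤ k := le_trans (by omega) hk
        exact_mod_cast Nat.lt_of_lt_of_le (by norm_num) this
      have h3 : (6:ℝ) / d < (k:ℝ) := by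
        have h4 : (6:ℝ) / d ≤ (⌈6 / d⌉₊ : ℝ) := Nat.le_ceil _
        have h5 : ((⌈6 / d⌉₊ + 1 : ℕ) : ℝ) ≤ (k:ℝ) := by exact_mod_cast hk
        push_cast at h5
        linarith
      rw [div_le_div_iff₀ (by linarith) hkpos] at hle
      rw [div_lt_iff₀ hd] at h3
      linarith
    set F : Set (Pt (m + 2)) := ⋃ k ∈ Finset.range k₁, pt m k '' (box m k) with hFdef
    have hFfin : F.Finite := by
      apply Set.Finite.biUnion (Finset.finite_toSet _)
      intro k _
      exact Set.Finite.image _ (Finset.finite_toSet _)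
    have hFE : F ⊆ E m := by
      intro x hx
      simp only [hFdef, Set.mem_iUnion] at hx
      obtain ⟨k, -, hk⟩ := hx
      exact Set.mem_iUnion.2 ⟨k, hk⟩
    have hsub : E m ∩ ball z (d / 2) ⊆ F := by
      rintro x ⟨hxE, hxb⟩
      obtain ⟨k, a, ha, rfl⟩ := mem_E.1 hxE
      have hklt : k < k₁ := by
        by_contra hge
        push_neg at hge
        apply hbig k hge
        have h6 := dist_pt_e0 ha
        rw [mem_ball] at hxb
        have h7 : d ≤ dist z (pt m k a) + dist (pt m k a) (e0 m) := dist_triangle _ _ _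
        rw [dist_comm] at hxb
        linarith
      simp only [hFdef, Set.mem_iUnion]
      exact ⟨k, Finset.mem_range.2 hklt, Set.mem_image_of_mem _ ha⟩
    have hzball : z ∈ ball z (d / 2) := by
      rw [mem_ball, dist_self]; linarith
    have hz2 : z ∈ closure (ball z (d / 2) ∩ E m) :=
      isOpen_ball.inter_closure ⟨hzball, hz⟩
    have hz3 : z ∈ closure F := by
      apply closure_mono _ hz2
      rw [Set.inter_comm]
      exact hsub
    rw [hFfin.isClosed.closure_eq] at hz3
    exact hFE hz3
  · apply Set.union_subset subset_closure
    intro z hz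
    rw [Set.mem_singleton_iff] at hz
    rw [hz]
    exact e0_mem_closure m

lemma limitSet_E (m : ℕ) : limitSet (E m) = {e0 m} := by
  rw [limitSet, closure_E]
  apply Subset.antisymm
  · rintro z ⟨hz1, hz2⟩
    rcases hz1 with h | h
    · exact absurd h hz2
    · exact h
  · intro z hz
    rw [Set.mem_singleton_iff] at hz
    subst hz
    exact ⟨Or.inr rfl, e0_not_mem m⟩

def EEquiv (m : ℕ) : (Σ k : ℕ, {a // a ∈ box m k}) ≃ (E m : Set (Pt (m + 2))) :=
  Equiv.ofBijective
    (fun j => ⟨pt m j.1 j.2.1, mem_E.2 ⟨j.1, j.2.1, j.2.2, rfl⟩⟩)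
    (by
      constructor
      · rintro ⟨k, a, ha⟩ ⟨k', a', ha'⟩ h
        simp only [Subtype.mk_eq_mk] at h
        obtain ⟨hk, hA⟩ := pt_inj ha ha' h
        subst hk
        subst hA
        rfl
      · rintro ⟨x, hx⟩
        obtain ⟨k, a, ha, rfl⟩ := mem_E.1 hx
        exact ⟨⟨k, a, ha⟩, rfl⟩)

lemma accSeries_E (m : ℕ) (s : ℝ) :
    accSeries (E m) s
      = ∑' k : ℕ, ((box m k).card : ℝ≥0∞) * ENNReal.ofReal (((2:ℝ)⁻¹ ^ k) ^ s) := by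
  rw [accSeries]
  rw [← Equiv.tsum_eq (EEquiv m) (fun x => ENNReal.ofReal ((1 - ‖(x : Pt (m+2))‖) ^ s))]
  rw [ENNReal.tsum_sigma']
  congr 1
  funext k
  have hterm : ∀ a : {a // a ∈ box m k},
      ENNReal.ofReal ((1 - ‖((EEquiv m ⟨k, a⟩ : (E m : Set (Pt (m+2)))) : Pt (m+2))‖) ^ s)
        = ENNReal.ofReal (((2:ℝ)⁻¹ ^ k) ^ s) := by
    rintro ⟨a, ha⟩
    have h1 : ((EEquiv m ⟨k, ⟨a, ha⟩⟩ : (E m : Set (Pt (m+2)))) : Pt (m+2)) = pt m k a := rfl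
    rw [h1, norm_pt ha]
    norm_num
  calc ∑' a : {a // a ∈ box m k},
        ENNReal.ofReal ((1 - ‖((EEquiv m ⟨k, a⟩ : (E m : Set (Pt (m+2)))) : Pt (m+2))‖) ^ s)
      = ∑' _a : {a // a ∈ box m k}, ENNReal.ofReal (((2:ℝ)⁻¹ ^ k) ^ s) := by
        exact tsum_congr hterm
    _ = ((box m k).card : ℝ≥0∞) * ENNReal.ofReal (((2:ℝ)⁻¹ ^ k) ^ s) := by
        rw [tsum_fintype]
        rw [Finset.sum_const]
        rw [nsmul_eq_mul]
        congr 1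
        rw [Finset.card_univ, Fintype.card_coe]

lemma two_pow_rpow (k : ℕ) (t : ℝ) : ((2:ℝ) ^ k : ℝ) ^ t = ((2:ℝ) ^ t) ^ k := by
  rw [← Real.rpow_natCast 2 k, ← Real.rpow_mul (by norm_num), mul_comm,
    Real.rpow_mul (by norm_num), Real.rpow_natCast]

lemma key_prod (k m : ℕ) (s : ℝ) :
    ((2:ℝ) ^ k) ^ (m + 1) * ((2:ℝ)⁻¹ ^ k) ^ s = ((2:ℝ) ^ (((m:ℝ) + 1) - s)) ^ k := by
  have hx : (0:ℝ) < (2:ℝ) ^ k := by positivity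
  have h1 : ((2:ℝ)⁻¹ ^ k) ^ s = ((2:ℝ) ^ k) ^ (-s) := by
    rw [inv_pow, Real.inv_rpow hx.le, ← Real.rpow_neg hx.le]
  rw [h1, ← Real.rpow_natCast ((2:ℝ) ^ k) (m + 1), ← Real.rpow_add hx, two_pow_rpow]
  congr 1
  push_cast
  ring

lemma card_box_le (m k : ℕ) : (box m k).card ≤ (4 * 2 ^ k) ^ (m + 1) := by
  by_cases hk : 2 * (m + 2) ≤ k
  · rw [card_box hk]
    apply Nat.pow_le_pow_left
    have := Mk_le_two_pow hk
    have h1 : 1 ≤ 2 ^ k := Nat.one_le_two_pow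
    omega
  · rw [box, if_neg hk]
    simp

lemma accSeries_lt_top (m : ℕ) {s : ℝ} (hs : ((m:ℝ) + 1) < s) :
    accSeries (E m) s < ⊤ := by
  rw [accSeries_E]
  set q : ℝ := (2:ℝ) ^ (((m:ℝ) + 1) - s) with hqdef
  have hq0 : 0 < q := Real.rpow_pos_of_pos (by norm_num) _
  have hq1 : q < 1 := Real.rpow_lt_one_of_one_lt_of_neg (by norm_num) (by linarith)
  have hterm : ∀ k : ℕ,
      ((box m k).card : ℝ≥0∞) * ENNReal.ofReal (((2:ℝ)⁻¹ ^ k) ^ s)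
        ≤ ENNReal.ofReal ((4:ℝ) ^ (m + 1)) * ENNReal.ofReal q ^ k := by
    intro k
    have ht0 : (0:ℝ) ≤ ((2:ℝ)⁻¹ ^ k) ^ s := Real.rpow_nonneg (by positivity) _
    have hreal : ((box m k).card : ℝ) * ((2:ℝ)⁻¹ ^ k) ^ s ≤ (4:ℝ) ^ (m + 1) * q ^ k := by
      have h1 : ((box m k).card : ℝ) ≤ ((4:ℝ) * 2 ^ k) ^ (m + 1) := by
        exact_mod_cast card_box_le m k
      calc ((box m k).card : ℝ) * ((2:ℝ)⁻¹ ^ k) ^ s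
          ≤ ((4:ℝ) * 2 ^ k) ^ (m + 1) * ((2:ℝ)⁻¹ ^ k) ^ s :=
            mul_le_mul_of_nonneg_right h1 ht0
        _ = (4:ℝ) ^ (m + 1) * (((2:ℝ) ^ k) ^ (m + 1) * ((2:ℝ)⁻¹ ^ k) ^ s) := by
            rw [mul_pow]; ring
        _ = (4:ℝ) ^ (m + 1) * q ^ k := by rw [key_prod]
    calc ((box m k).card : ℝ≥0∞) * ENNReal.ofReal (((2:ℝ)⁻¹ ^ k) ^ s)
        = ENNReal.ofReal (((box m k).card : ℝ) * ((2:ℝ)⁻¹ ^ k) ^ s) := by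
          rw [ENNReal.ofReal_mul (by positivity)]
          congr 1
          simp [ENNReal.ofReal_natCast]
      _ ≤ ENNReal.ofReal ((4:ℝ) ^ (m + 1) * q ^ k) := ENNReal.ofReal_le_ofReal hreal
      _ = ENNReal.ofReal ((4:ℝ) ^ (m + 1)) * ENNReal.ofReal q ^ k := by
          rw [ENNReal.ofReal_mul (by positivity), ENNReal.ofReal_pow hq0.le]
  calc (∑' k : ℕ, ((box m k).card : ℝ≥0∞) * ENNReal.ofReal (((2:ℝ)⁻¹ ^ k) ^ s))
      ≤ ∑' k : ℕ, ENNReal.ofReal ((4:ℝ) ^ (m + 1)) * ENNReal.ofReal q ^ k :=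
        ENNReal.tsum_le_tsum hterm
    _ = ENNReal.ofReal ((4:ℝ) ^ (m + 1)) * ∑' k : ℕ, ENNReal.ofReal q ^ k :=
        ENNReal.tsum_mul_left
    _ < ⊤ := by
        apply ENNReal.mul_lt_top ENNReal.ofReal_lt_top
        rw [ENNReal.tsum_geometric]
        rw [ENNReal.inv_lt_top]
        rw [tsub_pos_iff_lt]
        exact ENNReal.ofReal_lt_one.2 hq1

lemma accSeries_eq_top (m : ℕ) {s : ℝ} (hs : s < (m:ℝ) + 1) :
    accSeries (E m) s = ⊤ := by
  apply ENNReal.eq_top_of_forall_nnreal_le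
  intro C
  rw [accSeries_E]
  set r : ℝ := (2:ℝ) ^ (((m:ℝ) + 1) - s) with hrdef
  have hr1 : 1 < r := Real.one_lt_rpow_iff_of_pos (by norm_num) |>.2 (by norm_num; linarith)
  have hr0 : 0 < r := by linarith
  have hrinv : ‖r⁻¹‖ < 1 := by
    rw [Real.norm_eq_abs, abs_of_pos (by positivity)]
    rw [inv_lt_one_iff₀]
    right; exact hr1
  have hsum := summable_pow_mul_geometric_of_norm_lt_one (m + 1) hrinv
  have htend := hsum.tendsto_atTop_zero
  set b : ℝ := (2 * ((m:ℝ) + 2)) ^ (m + 1) with hbdef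
  have hb0 : 0 < b := by positivity
  set ε : ℝ := ((C:ℝ) * b + 1)⁻¹ with hedef
  have hC0 : (0:ℝ) ≤ (C:ℝ) := C.coe_nonneg
  have hε0 : 0 < ε := by positivity
  have hev : ∀ᶠ k : ℕ in atTop, (k:ℝ) ^ (m + 1) * r⁻¹ ^ k < ε :=
    htend.eventually (gt_mem_nhds hε0)
  obtain ⟨N, hN⟩ := hev.exists_forall_of_atTop
  set k := max N (2 * (m + 2)) with hkdef
  have hkN : N ≤ k := le_max_left _ _
  have hkK : 2 * (m + 2) ≤ k := le_max_right _ _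
  have hklt := hN k hkN
  -- real lower bound for the k-th term
  have hkpos := kR_pos hkK
  have hrk0 : (0:ℝ) < r ^ k := by positivity
  have hmain : (C:ℝ) * (2 * (k:ℝ) * ((m:ℝ) + 2)) ^ (m + 1) ≤ r ^ k := by
    have h1 : (k:ℝ) ^ (m + 1) < ε * r ^ k := by
      have h6 := mul_lt_mul_of_pos_right hklt hrk0
      rwa [mul_assoc, ← mul_pow, inv_mul_cancel₀ (ne_of_gt hr0), one_pow, mul_one] at h6
    have h2 : (2 * (k:ℝ) * ((m:ℝ) + 2)) ^ (m + 1) = b * (k:ℝ) ^ (m + 1) := by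
      rw [hbdef, ← mul_pow]
      ring_nf
    rw [h2]
    have h3 : (C:ℝ) * b * (k:ℝ) ^ (m+1) ≤ ((C:ℝ) * b + 1) * (k:ℝ) ^ (m+1) := by
      apply mul_le_mul_of_nonneg_right _ (by positivity)
      linarith
    have h4 : ((C:ℝ) * b + 1) * (k:ℝ) ^ (m+1) < ((C:ℝ) * b + 1) * (ε * r ^ k) :=
      mul_lt_mul_of_pos_left h1 (by positivity)
    have h5 : ((C:ℝ) * b + 1) * (ε * r ^ k) = r ^ k := by
      rw [hedef]
      field_simp
    calc (C:ℝ) * (b * (k:ℝ) ^ (m+1)) = (C:ℝ) * b * (k:ℝ) ^ (m+1) := by ring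
      _ ≤ _ := h3
      _ ≤ r ^ k := by linarith
  -- the k-th term of the series dominates C
  have hterm : (C : ℝ≥0∞)
      ≤ ((box m k).card : ℝ≥0∞) * ENNReal.ofReal (((2:ℝ)⁻¹ ^ k) ^ s) := by
    have hreal : (C:ℝ) ≤ ((box m k).card : ℝ) * ((2:ℝ)⁻¹ ^ k) ^ s := by
      have hM : ((2:ℝ) ^ k) ≤ 2 * (k:ℝ) * ((m:ℝ) + 2) * (Mk m k : ℝ) := by
        have := two_pow_le_Mk hkK
        calc ((2:ℝ) ^ k) = ((2 ^ k : ℕ) : ℝ) := by push_cast; ring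
          _ ≤ ((2 * (k * (m + 2)) * Mk m k : ℕ) : ℝ) := by exact_mod_cast this
          _ = 2 * (k:ℝ) * ((m:ℝ) + 2) * (Mk m k : ℝ) := by push_cast; ring
      have hcard : ((Mk m k : ℝ)) ^ (m + 1) ≤ ((box m k).card : ℝ) := by
        rw [card_box hkK]
        push_cast
        apply pow_le_pow_left₀ (by positivity)
        have : (0:ℝ) ≤ (Mk m k : ℝ) := by positivity
        linarith
      have ht0 : (0:ℝ) ≤ ((2:ℝ)⁻¹ ^ k) ^ s := Real.rpow_nonneg (by positivity) _
      have hd0 : (0:ℝ) < 2 * (k:ℝ) * ((m:ℝ) + 2) := by positivity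
      have hMlow : ((2:ℝ) ^ k) / (2 * (k:ℝ) * ((m:ℝ) + 2)) ≤ (Mk m k : ℝ) := by
        rw [div_le_iff₀ hd0]
        linarith [hM]
      have hpow : (((2:ℝ) ^ k) / (2 * (k:ℝ) * ((m:ℝ) + 2))) ^ (m + 1)
          ≤ ((Mk m k : ℝ)) ^ (m + 1) :=
        pow_le_pow_left₀ (by positivity) hMlow _
      have hkey : (((2:ℝ) ^ k) / (2 * (k:ℝ) * ((m:ℝ) + 2))) ^ (m + 1) * ((2:ℝ)⁻¹ ^ k) ^ s
          = r ^ k / (2 * (k:ℝ) * ((m:ℝ) + 2)) ^ (m + 1) := by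
        rw [div_pow, div_mul_eq_mul_div, key_prod]
      calc (C:ℝ) ≤ r ^ k / (2 * (k:ℝ) * ((m:ℝ) + 2)) ^ (m + 1) := by
            rw [le_div_iff₀ (by positivity)]
            linarith [hmain]
        _ = (((2:ℝ) ^ k) / (2 * (k:ℝ) * ((m:ℝ) + 2))) ^ (m + 1) * ((2:ℝ)⁻¹ ^ k) ^ s :=
            hkey.symm
        _ ≤ ((Mk m k : ℝ)) ^ (m + 1) * ((2:ℝ)⁻¹ ^ k) ^ s :=
            mul_le_mul_of_nonneg_right hpow ht0
        _ ≤ ((box m k).card : ℝ) * ((2:ℝ)⁻¹ ^ k) ^ s :=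
            mul_le_mul_of_nonneg_right hcard ht0
    calc (C : ℝ≥0∞) = ENNReal.ofReal (C:ℝ) := (ENNReal.ofReal_coe_nnreal).symm
      _ ≤ ENNReal.ofReal (((box m k).card : ℝ) * ((2:ℝ)⁻¹ ^ k) ^ s) :=
          ENNReal.ofReal_le_ofReal hreal
      _ = ((box m k).card : ℝ≥0∞) * ENNReal.ofReal (((2:ℝ)⁻¹ ^ k) ^ s) := by
          rw [ENNReal.ofReal_mul (by positivity)]
          congr 1
          simp [ENNReal.ofReal_natCast]
  exact le_trans hterm (ENNReal.le_tsum k)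

lemma critExp_E (m : ℕ) : critExp (E m) = ((m + 1 : ℕ) : ℝ≥0∞) := by
  apply le_antisymm
  · apply ENNReal.le_of_forall_pos_le_add
    intro ε hε _
    have hconv : accSeries (E m) (((m + 1 : ℝ≥0) + ε : ℝ≥0) : ℝ) < ⊤ := by
      apply accSeries_lt_top
      push_cast
      have : (0:ℝ) < (ε:ℝ) := by exact_mod_cast hε
      linarith
    have h2 := iInf₂_le (f := fun (s : ℝ≥0) (_ : accSeries (E m) (s : ℝ) < ⊤) => (s : ℝ≥0∞))
      ((m + 1 : ℝ≥0) + ε) hconv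
    calc critExp (E m) ≤ (((m + 1 : ℝ≥0) + ε : ℝ≥0) : ℝ≥0∞) := h2
      _ = ((m + 1 : ℕ) : ℝ≥0∞) + (ε : ℝ≥0∞) := by push_cast; ring
  · apply le_iInf
    intro s
    apply le_iInf
    intro hconv
    by_contra hc
    push_neg at hc
    have hs : (s : ℝ) < (m:ℝ) + 1 := by
      have h1 : (s : ℝ≥0∞) < ((m + 1 : ℕ) : ℝ≥0∞) := hc
      have h2 : s < ((m + 1 : ℕ) : ℝ≥0) := by exact_mod_cast h1
      have h3 : (s:ℝ) < ((m + 1 : ℕ) : ℝ) := by exact_mod_cast h2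
      push_cast at h3
      linarith
    rw [accSeries_eq_top m hs] at hconv
    exact absurd hconv (lt_irrefl _)

lemma packingNumber_singleton {n : ℕ} (w : Pt n) (δ : ℝ) :
    packingNumber ({w} : Set (Pt n)) δ = 1 := by
  apply le_antisymm
  · apply iSup_le; intro Z
    apply iSup_le; intro hZ
    apply iSup_le; intro _
    have : Z.card ≤ 1 := by
      apply Finset.card_le_one.2
      intro x hx y hy
      have hx1 : x ∈ ({w} : Set (Pt n)) := hZ hx
      have hy1 : y ∈ ({w} : Set (Pt n)) := hZ hy
      rw [Set.mem_singleton_iff] at hx1 hy1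
      rw [hx1, hy1]
    exact_mod_cast this
  · have h1 : ({w} : Finset (Pt n)).card = 1 := Finset.card_singleton w
    have h2 : (({w} : Finset (Pt n)) : Set (Pt n)) ⊆ ({w} : Set (Pt n)) := by simp
    have h3 : (({w} : Finset (Pt n)) : Set (Pt n)).PairwiseDisjoint
        (fun x => closedBall x δ) := by
      simp only [Finset.coe_singleton]
      exact Set.pairwiseDisjoint_singleton _ _
    refine le_trans ?_ (le_iSup _ ({w} : Finset (Pt n)))
    rw [iSup_pos h2, iSup_pos h3, h1]
    rfl

lemma boxDim_fun_singleton {n : ℕ} (w : Pt n) :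
    (fun δ : ℝ => ENNReal.ofReal
        (Real.log (((packingNumber ({w} : Set (Pt n)) δ).toNat : ℝ)) / (-Real.log δ)))
      = fun _ => 0 := by
  funext δ
  rw [packingNumber_singleton]
  simp

lemma upperBoxDim_singleton {n : ℕ} (w : Pt n) : upperBoxDim ({w} : Set (Pt n)) = 0 := by
  rw [upperBoxDim, boxDim_fun_singleton]
  exact limsup_const 0

lemma lowerBoxDim_singleton {n : ℕ} (w : Pt n) : lowerBoxDim ({w} : Set (Pt n)) = 0 := by
  rw [lowerBoxDim, boxDim_fun_singleton]
  exact liminf_const 0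

section Transfer

variable {N : ℕ} (f : Pt N ≃ₗᵢ[ℝ] Pt N)

lemma image_closedBall' (x : Pt N) (r : ℝ) :
    ⇑f '' closedBall x r = closedBall (f x) r := by
  have := f.toIsometryEquiv.image_closedBall x r
  rwa [LinearIsometryEquiv.coe_toIsometryEquiv] at this

lemma image_closure' (F : Set (Pt N)) : closure (⇑f '' F) = ⇑f '' closure F := by
  have h0 : ⇑f.toIsometryEquiv.toHomeomorph = ⇑f := rfl
  have := f.toIsometryEquiv.toHomeomorph.image_closure F
  rw [h0] at this
  exact this.symm

lemma accSeries_image (F : Set (Pt N)) (s : ℝ) :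
    accSeries (⇑f '' F) s = accSeries F s := by
  rw [accSeries, accSeries, ← Equiv.tsum_eq (Equiv.Set.image ⇑f F f.injective)]
  apply tsum_congr
  rintro ⟨x, hx⟩
  congr 2
  have h1 : ((Equiv.Set.image ⇑f F f.injective ⟨x, hx⟩ : (⇑f '' F : Set (Pt N))) : Pt N)
      = f x := rfl
  rw [h1, f.norm_map]

end Transfer

end Aux

/-- **Example: for any `w ∈ S^{n-1}` (n ≥ 2) there is a discrete separated `E ⊆ 𝔻ⁿ` with
`L(E) = {w}` (whence `dim_H L(E) = dim_B L(E) = 0`) but `δ(E) = n − 1`.** -/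
theorem exists_separated_singleton_limitSet_critExp_max {n : ℕ} (hn : 2 ≤ n)
    (w : Pt n) (hw : w ∈ sphere (0 : Pt n) 1) :
    ∃ E : Set (Pt n), E ⊆ ball 0 1 ∧ IsDiscreteSet E ∧ SeparatedSet E ∧
      limitSet E = {w} ∧
      dimH (limitSet E) = 0 ∧
      lowerBoxDim (limitSet E) = 0 ∧
      upperBoxDim (limitSet E) = 0 ∧
      critExp E = ((n - 1 : ℕ) : ℝ≥0∞) := by
  obtain ⟨m, rfl⟩ : ∃ m, n = m + 2 := ⟨n - 2, by omega⟩
  have hw1 : ‖w‖ = 1 := by simpa using hw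
  have hnorm : ‖Aux.e0 m‖ = ‖w‖ := by rw [Aux.norm_e0, hw1]
  set f : Pt (m + 2) ≃ₗᵢ[ℝ] Pt (m + 2) := Submodule.reflection (ℝ ∙ (Aux.e0 m - w))ᗮ with hfdef
  have hf : f (Aux.e0 m) = w := Submodule.reflection_sub hnorm
  refine ⟨⇑f '' Aux.E m, ?_, ?_, ?_, ?_, ?_, ?_, ?_, ?_⟩
  · -- subset of the unit ball
    rintro _ ⟨x, hx, rfl⟩
    have h1 := Aux.E_subset_ball m hx
    rw [mem_ball, dist_zero_right] at h1 ⊢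
    rwa [f.norm_map]
  · -- discrete
    rintro _ ⟨x, hx, rfl⟩
    obtain ⟨r, hr, hsep⟩ := Aux.E_discrete m x hx
    refine ⟨r, hr, ?_⟩
    rw [← Aux.image_closedBall' f, ← Set.image_inter f.injective, hsep, Set.image_singleton]
  · -- separated
    refine ⟨1/3, by norm_num, by norm_num, ?_⟩
    rintro _ ⟨x, hx, rfl⟩
    rw [f.norm_map, ← Aux.image_closedBall' f, ← Set.image_inter f.injective,
      Aux.E_separation hx, Set.image_singleton]
  · -- limit set
    rw [limitSet, Aux.image_closure' f, ← Set.image_diff f.injective, ← limitSet,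
      Aux.limitSet_E, Set.image_singleton, hf]
  · -- Hausdorff dimension
    rw [limitSet, Aux.image_closure' f, ← Set.image_diff f.injective, ← limitSet,
      Aux.limitSet_E, Set.image_singleton, hf]
    exact dimH_singleton w
  · -- lower box dimension
    rw [limitSet, Aux.image_closure' f, ← Set.image_diff f.injective, ← limitSet,
      Aux.limitSet_E, Set.image_singleton, hf]
    exact Aux.lowerBoxDim_singleton w
  · -- upper box dimension
    rw [limitSet, Aux.image_closure' f, ← Set.image_diff f.injective, ← limitSet,
      Aux.limitSet_E, Set.image_singleton, hf]
    exact Aux.upperBoxDim_singleton w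
  · -- critical exponent
    have hacc : ∀ s : ℝ≥0, accSeries (⇑f '' Aux.E m) (s:ℝ) = accSeries (Aux.E m) (s:ℝ) :=
      fun s => Aux.accSeries_image f (Aux.E m) s
    have h1 : critExp (⇑f '' Aux.E m) = critExp (Aux.E m) := by
      rw [critExp, critExp]
      apply iInf_congr
      intro s
      rw [hacc s]
    rw [h1, Aux.critExp_E m]
    norm_num

end
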